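/- Let G be a finite abelian group and A a finite G-module with A^G = 0. Then H¹(G,A) = 0. -/

import Mathlib

lemma exists_idem_pow {M : Type*} [Monoid M] [Finite M] (t : M) :
    ∃ m : ℕ, 0 < m ∧ t ^ m * t ^ m = t ^ m := by
  obtain ⟨i, j, hij, hpow⟩ := Finite.exists_ne_map_eq_of_infinite (fun n : ℕ => t ^ n)
  wlog h : i < j generalizing i j
  · exact this j i hij.symm hpow.symm (by omega)
  set d := j - i with hd
  have hd1 : 0 < d := by omega
  have key : ∀ k n, i ≤ n → t ^ (n + k * d) = t ^ n := by
    intro k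
    induction k with
    | zero => simp
    | succ k ih =>
      intro n hn
      have h1 : n + (k+1) * d = (n + d) + k * d := by ring
      have h2 : t ^ (n + d) = t ^ n := by
        have h3 : n + d = (n - i) + j := by omega
        have h4 : n = (n - i) + i := by omega
        rw [h3, pow_add, ← hpow, ← pow_add, ← h4]
      rw [h1, ih (n + d) (by omega), h2]
  refine ⟨(i+1) * d, by positivity, ?_⟩
  rw [← pow_add]
  exact key (i+1) ((i+1)*d) (by nlinarith)

/-- For a finite abelian group `G` and a finite `G`-module `A` with `A^G = 0`,
`H¹(G,A) = 0`: every derivation is inner. -/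
theorem h1_vanishes_finite_abelian {G A : Type*} [CommGroup G] [Finite G]
    [AddCommGroup A] [Finite A] [DistribMulAction G A]
    (hAG : ∀ a : A, (∀ g : G, g • a = a) → a = 0)
    (f : G → A) (hf : ∀ x y : G, f (x * y) = x • f y + f x) :
    ∃ a : A, ∀ x : G, f x = x • a - a := by
  classical
  have : Fintype G := Fintype.ofFinite G
  have hE : Finite (AddMonoid.End A) :=
    Finite.of_injective (fun f => (f : A → A)) DFunLike.coe_injective
  set ρ : G →* AddMonoid.End A := DistribMulAction.toAddMonoidEnd G A with hρdef
  have hρ : ∀ (x : G) (a : A), ρ x a = x • a := fun _ _ => rfl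
  have hcomm : ∀ x y : G, Commute (ρ x) (ρ y) := by
    intro x y
    show ρ x * ρ y = ρ y * ρ x
    rw [← map_mul, ← map_mul, mul_comm]
  set φ : G → AddMonoid.End A := fun g => ρ g - 1 with hφdef
  have hρφ : ∀ x g, Commute (ρ x) (φ g) :=
    fun x g => (hcomm x g).sub_right (Commute.one_right _)
  have hφφ : ∀ g h, Commute (φ g) (φ h) :=
    fun g h => (hρφ g h).sub_left (Commute.one_left _)
  have hφapp : ∀ (g : G) (b : A), φ g b = g • b - b := by
    intro g b
    show (ρ g - 1) b = g • b - b
    rw [show (ρ g - 1) b = ρ g b - (1 : AddMonoid.End A) b from rfl]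
    rfl
  -- idempotent powers
  choose m hm1 hm2 using fun g => exists_idem_pow (φ g)
  set e : G → AddMonoid.End A := fun g => φ g ^ m g with hedef
  have he2 : ∀ g, e g * e g = e g := hm2
  have hρe : ∀ x g, Commute (ρ x) (e g) := fun x g => (hρφ x g).pow_right _
  have hφe : ∀ g h, Commute (φ g) (e h) := fun g h => (hφφ g h).pow_right _
  have hee : ∀ g h, Commute (e g) (e h) := fun g h => ((hφφ g h).pow_left _).pow_right _
  -- the product over a list
  set P : List G → AddMonoid.End A := fun l => (l.map fun g => 1 - e g).prod with hPdef
  have hPnil : P [] = 1 := rfl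
  have hPcons : ∀ g l, P (g :: l) = (1 - e g) * P l := by
    intro g l; simp only [P, List.map_cons, List.prod_cons]
  have hρP : ∀ x l, Commute (ρ x) (P l) := by
    intro x l
    induction l with
    | nil => exact Commute.one_right _
    | cons g l ih =>
      rw [hPcons]
      exact ((Commute.one_right _).sub_right (hρe x g)).mul_right ih
  have hφP : ∀ g l, Commute (φ g) (P l) := by
    intro g l
    induction l with
    | nil => exact Commute.one_right _
    | cons h l ih =>
      rw [hPcons]
      exact ((Commute.one_right _).sub_right (hφe g h)).mul_right ih
  have heP : ∀ g l, Commute (e g) (P l) := by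
    intro g l
    induction l with
    | nil => exact Commute.one_right _
    | cons h l ih =>
      rw [hPcons]
      exact ((Commute.one_right _).sub_right (hee g h)).mul_right ih
  have hek : ∀ (l : List G) (g : G), g ∈ l → e g * P l = 0 := by
    intro l
    induction l with
    | nil => intro g hg; simp at hg
    | cons h l ih =>
      intro g hg
      rw [hPcons, ← mul_assoc]
      rcases List.mem_cons.1 hg with rfl | hg
      · have : e g * (1 - e g) = 0 := by rw [mul_sub, mul_one, he2 g, sub_self]
        rw [this, zero_mul]
      · have hc : e g * (1 - e h) = (1 - e h) * e g :=
          ((Commute.one_right (e g)).sub_right (hee g h)).eq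
        rw [hc, mul_assoc, ih g hg, mul_zero]
  -- the enumeration
  set L : List G := (Finset.univ : Finset G).toList with hLdef
  have hL : ∀ g : G, g ∈ L := fun g => Finset.mem_toList.2 (Finset.mem_univ g)
  -- key vanishing: P L = 0
  have hswap : ∀ {s t : AddMonoid.End A}, Commute s t → ∀ b : A, s (t b) = t (s b) := by
    intro s t h b
    have : (s * t) b = (t * s) b := by rw [h.eq]
    exact this
  have lemD : ∀ (t : AddMonoid.End A) (n : ℕ) (b : A), b ≠ 0 → (t ^ n) b = 0 →
      ∃ j, (t ^ j) b ≠ 0 ∧ t ((t ^ j) b) = 0 := by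
    intro t n
    induction n with
    | zero =>
      intro b hb h0
      rw [pow_zero] at h0
      exact absurd h0 hb
    | succ n ih =>
      intro b hb h0
      by_cases h : t b = 0
      · exact ⟨0, by simpa using hb, by simpa using h⟩
      · have hx : (t ^ (n+1)) b = (t ^ n) (t b) := by rw [pow_succ]; rfl
        rw [hx] at h0
        obtain ⟨j, hj1, hj2⟩ := ih (t b) h h0
        have hjj : (t ^ (j+1)) b = (t ^ j) (t b) := by rw [pow_succ]; rfl
        exact ⟨j + 1, by rw [hjj]; exact hj1, by rw [hjj]; exact hj2⟩
  have hc0 : P L = 0 := by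
    by_contra hne
    have hex : ∃ a : A, P L a ≠ 0 := by
      by_contra h
      push_neg at h
      exact hne (DFunLike.ext _ _ h)
    obtain ⟨a, ha⟩ := hex
    have h1 : ∀ g, e g (P L a) = 0 := by
      intro g
      have : e g (P L a) = (e g * P L) a := rfl
      rw [this, hek L g (hL g)]
      rfl
    have key : ∀ l : List G, ∀ b : A, b ≠ 0 → (∀ g, e g b = 0) →
        ∃ b', b' ≠ 0 ∧ (∀ g, e g b' = 0) ∧ ∀ g ∈ l, φ g b' = 0 := by
      intro l
      induction l with
      | nil => intro b hb he; exact ⟨b, hb, he, by simp⟩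
      | cons h l ih =>
        intro b hb he
        obtain ⟨b', hb', he', hl'⟩ := ih b hb he
        obtain ⟨j, hj1, hj2⟩ := lemD (φ h) (m h) b' hb' (he' h)
        refine ⟨(φ h ^ j) b', hj1, ?_, ?_⟩
        · intro g
          rw [hswap (((hφe h g).symm).pow_right j) b', he' g, map_zero]
        · intro g hg
          rcases List.mem_cons.1 hg with rfl | hg
          · exact hj2
          · rw [hswap ((hφφ g h).pow_right j) b', hl' g hg, map_zero]
    obtain ⟨b, hb0, _, hbfix⟩ := key L (P L a) ha h1
    refine hb0 (hAG b fun g => ?_)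
    have := hbfix g (hL g)
    rw [hφapp] at this
    have := sub_eq_zero.1 this
    exact this
  -- derivation swap identity
  have hfswap : ∀ g x : G, g • f x - f x = x • f g - f g := by
    intro g x
    have h1 : g • f x + f g = x • f g + f x := by
      rw [← hf g x, ← hf x g, mul_comm]
    rw [sub_eq_sub_iff_add_eq_add]
    exact h1
  -- main induction
  have lemE : ∀ l : List G, ∃ a : A, ∀ x : G, P l (f x) = f x - (x • a - a) := by
    intro l
    induction l with
    | nil => exact ⟨0, fun x => by rw [hPnil]; simp⟩
    | cons g l ih =>
      obtain ⟨a, ha⟩ := ih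
      set D : AddMonoid.End A := φ g ^ (m g - 1) * P l with hDdef
      refine ⟨a + D (f g), fun x => ?_⟩
      have hρD : Commute (ρ x) D := ((hρφ x g).pow_right _).mul_right (hρP x l)
      have step1 : P (g :: l) (f x) = P l (f x) - (e g * P l) (f x) := by
        rw [hPcons, sub_mul, one_mul]; rfl
      have step2 : e g * P l = D * φ g := by
        have hmg : m g = m g - 1 + 1 := by have := hm1 g; omega
        rw [hDdef, mul_assoc, ← (hφP g l).eq, ← mul_assoc, ← pow_succ, ← hmg]
      have step3 : (D * φ g) (f x) = x • D (f g) - D (f g) := by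
        have h4 : (D * φ g) (f x) = D (φ g (f x)) := rfl
        rw [h4, hφapp, hfswap, map_sub]
        congr 1
        have h5 := hswap hρD (f g)
        rw [hρ, hρ] at h5
        exact h5.symm
      rw [step1, step2, step3, ha x, smul_add]
      abel
  obtain ⟨a, ha⟩ := lemE L
  refine ⟨a, fun x => ?_⟩
  have := ha x
  rw [hc0] at this
  have h0 : (0 : AddMonoid.End A) (f x) = 0 := rfl
  rw [h0] at this
  exact sub_eq_zero.1 this.symm
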